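/- Let K be a totally real number field of degree d, and fix: a rational prime p unramified in K with ℓ such that every positive semidefinite integral binary quadratic form over K with scale divisible by p^ℓ is represented by I₅; r such that every totally positive a ∈ O with Tr(a) ≥ r is represented by I₅; and a totally positive integral basis ω₁,…,ω_d with associated constant γ. Let n ≥ 2, A = diag(a₁,…,aₙ) diagonal over O, S = (s_{ij}) symmetric over O, and for each (i,j) let π_{ij} ∈ P be the representative of s_{ij} mod p^ℓO (where P = {Σf_iω_i : 1 ≤ f_i ≤ p^ℓ}). Suppose a_i = Σ_j t_{ij} with t_{ij} totally positive, t_{ij}t_{ji} ≻ (s_{ij} − π_{ij})² for all j, and min over embeddings of (t_{ii}+s_{ii}) exceeds 2(n−1)γ + r/d for all i. Then A + S is represented by the sum of 5n + (n(n−1)/2)(d+5) squares of linear forms over O, i.e. A + S ≼ I_{5n + n(n−1)(d+5)/2}. -/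

import Mathlib

open NumberField Module Matrix

section Aux
variable {R : Type*} [CommRing R] {n : ℕ}

lemma gram_assemble {ι : Type*} [Fintype ι] (κ : ι → Type*) [∀ c, Fintype (κ c)]
    (W : ∀ c, Matrix (κ c) (Fin n) R) {m : ℕ}
    (hm : Fintype.card ((c : ι) × κ c) = m) :
    ∃ U : Matrix (Fin m) (Fin n) R, ∑ c, (W c)ᵀ * W c = Uᵀ * U := by
  obtain e := Fintype.equivFinOfCardEq hm
  refine ⟨fun q j => W (e.symm q).1 (e.symm q).2 j, ?_⟩
  ext i j
  rw [Matrix.sum_apply]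
  erw [Matrix.mul_apply]
  have : ∀ q : Fin m, (fun q j => W (e.symm q).1 (e.symm q).2 j)ᵀ i q *
      (fun q j => W (e.symm q).1 (e.symm q).2 j) q j
      = (fun s : (c : ι) × κ c => W s.1 s.2 i * W s.1 s.2 j) (e.symm q) := fun q => rfl
  rw [Finset.sum_congr rfl (fun q _ => this q),
    Equiv.sum_comp e.symm (fun s : (c : ι) × κ c => W s.1 s.2 i * W s.1 s.2 j),
    ← Finset.univ_sigma_univ, Finset.sum_sigma]
  exact Finset.sum_congr rfl fun c _ => by rw [Matrix.mul_apply]; rfl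

/-- placement of a 2×2 matrix into an n×n matrix at rows/cols i,j -/
def plc (i j : Fin n) (B : Matrix (Fin 2) (Fin 2) R) : Matrix (Fin n) (Fin n) R :=
  Matrix.of fun x y =>
    if x = i then (if y = i then B 0 0 else if y = j then B 0 1 else 0)
    else if x = j then (if y = i then B 1 0 else if y = j then B 1 1 else 0)
    else 0

lemma plc_add (i j : Fin n) (B C : Matrix (Fin 2) (Fin 2) R) :
    plc i j (B + C) = plc i j B + plc i j C := by
  ext x y
  simp only [plc, Matrix.add_apply, Matrix.of_apply]
  split_ifs <;> simp

/-- embedding of rows supported on two columns -/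
def emb (i j : Fin n) {κ : Type*} (W : Matrix κ (Fin 2) R) : Matrix κ (Fin n) R :=
  Matrix.of fun k x => if x = i then W k 0 else if x = j then W k 1 else 0

lemma emb_gram (i j : Fin n) (hij : i ≠ j) {κ : Type*} [Fintype κ]
    (W : Matrix κ (Fin 2) R) :
    (emb i j W)ᵀ * emb i j W = plc i j (Wᵀ * W) := by
  ext x y
  simp only [Matrix.mul_apply, Matrix.transpose_apply, emb, plc, Matrix.of_apply]
  by_cases hxi : x = i <;> by_cases hxj : x = j <;>
    by_cases hyi : y = i <;> by_cases hyj : y = j <;>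
      simp_all [hij, Ne.symm hij]

lemma gram_reindex {κ κ' : Type*} [Fintype κ] [Fintype κ'] (e : κ' ≃ κ)
    (W : Matrix κ (Fin n) R) :
    (W.submatrix e id)ᵀ * (W.submatrix e id) = Wᵀ * W := by
  ext i j
  rw [Matrix.mul_apply, Matrix.mul_apply]
  exact Equiv.sum_comp e (fun k => Wᵀ i k * W k j)

/-- embedding of rows supported on one column -/
def embD (i : Fin n) {κ : Type*} (v : κ → R) : Matrix κ (Fin n) R :=
  Matrix.of fun k x => if x = i then v k else 0

lemma embD_gram (i : Fin n) {κ : Type*} [Fintype κ] (v : κ → R) :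
    (embD i v)ᵀ * embD i v
      = Matrix.of fun x y => if x = i ∧ y = i then (∑ k, v k ^ 2) else 0 := by
  ext x y
  simp only [Matrix.mul_apply, Matrix.transpose_apply, embD, Matrix.of_apply]
  by_cases hxi : x = i <;> by_cases hyi : y = i <;>
    simp_all [sq]

lemma plc_diag_term (x i j : Fin n) (B : Matrix (Fin 2) (Fin 2) R) :
    (if i < j then plc i j B x x else 0)
      = (if x = i then (if i < j then B 0 0 else 0) else 0)
      + (if x = j then (if i < j then B 1 1 else 0) else 0) := by
  by_cases hij : i < j
  · rw [if_pos hij]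
    simp only [plc, Matrix.of_apply]
    split_ifs <;> simp_all
  · rw [if_neg hij]
    simp [hij]

lemma plc_offdiag_term (x z i j : Fin n) (hxz : x ≠ z) (B : Matrix (Fin 2) (Fin 2) R) :
    (if i < j then plc i j B x z else 0)
      = (if x = i then (if z = j then (if i < j then B 0 1 else 0) else 0) else 0)
      + (if z = i then (if x = j then (if i < j then B 1 0 else 0) else 0) else 0) := by
  by_cases hij : i < j
  · rw [if_pos hij]
    simp only [plc, Matrix.of_apply]
    split_ifs <;> simp_all
  · rw [if_neg hij]
    simp [hij]

lemma card_pairs (n : ℕ) :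
    Fintype.card {q : Fin n × Fin n // q.1 < q.2} = n * (n - 1) / 2 := by
  rw [Fintype.card_subtype, Finset.card_filter, Fintype.sum_prod_type]
  have h1 : ∀ i : Fin n, (∑ j : Fin n, if i < j then 1 else 0) = n - 1 - (i : ℕ) := by
    intro i
    rw [← Finset.card_filter]
    have : Finset.filter (fun j => i < j) Finset.univ = Finset.Ioi i := by
      ext j; simp
    rw [this, Fin.card_Ioi]
  rw [Finset.sum_congr rfl (fun i _ => h1 i),
    Fin.sum_univ_eq_sum_range (fun i => n - 1 - i),
    Finset.sum_range_reflect (fun i => i) n, Finset.sum_range_id]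

lemma psd2 (M : Matrix (Fin 2) (Fin 2) ℝ) (hsym : M 1 0 = M 0 1)
    (h00 : 0 ≤ M 0 0) (h11 : 0 ≤ M 1 1) (hdet : M 0 1 * M 1 0 ≤ M 0 0 * M 1 1) :
    M.PosSemidef := by
  rw [Matrix.posSemidef_iff_dotProduct_mulVec]
  constructor
  · ext i j
    fin_cases i <;> fin_cases j <;>
      simp [Matrix.conjTranspose_apply, hsym]
  · intro x
    have h : star x ⬝ᵥ M *ᵥ x =
        M 0 0 * (x 0 * x 0) + M 0 1 * (x 0 * x 1) + M 0 1 * (x 1 * x 0)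
          + M 1 1 * (x 1 * x 1) := by
      simp [dotProduct, Matrix.mulVec, Fin.sum_univ_two, hsym]
      ring
    rw [h, hsym] at *
    rcases eq_or_lt_of_le h00 with h0 | h0
    · have hb : M 0 1 = 0 := by nlinarith
      rw [hb, ← h0]
      nlinarith [sq_nonneg (x 1)]
    · nlinarith [sq_nonneg (M 0 0 * x 0 + M 0 1 * x 1), mul_nonneg h00 (sq_nonneg (x 1)),
        mul_pos h0 h0]

end Aux

lemma trace_eq_sum_real (K : Type*) [Field K] [NumberField K]
    (htr : Fintype.card (K →+* ℝ) = finrank ℚ K) (x : K) :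
    ((Algebra.trace ℚ K x : ℚ) : ℝ) = ∑ ν : K →+* ℝ, ν x := by
  apply Complex.ofReal_injective
  have h1 : algebraMap ℚ ℂ (Algebra.trace ℚ K x) = ∑ σ : K →ₐ[ℚ] ℂ, σ x :=
    trace_eq_sum_embeddings ℂ
  have h2 : ∑ σ : K →ₐ[ℚ] ℂ, σ x = ∑ τ : K →+* ℂ, τ x :=
    Fintype.sum_equiv (RingHom.equivRatAlgHom K ℂ).symm _ _ (fun σ => rfl)
  have hj : Function.Bijective (fun ν : K →+* ℝ => Complex.ofRealHom.comp ν) := by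
    rw [Fintype.bijective_iff_injective_and_card]
    constructor
    · intro ν₁ ν₂ h
      ext z
      have := RingHom.congr_fun h z
      simpa using this
    · rw [htr, NumberField.Embeddings.card K ℂ]
  have h3 : ∑ τ : K →+* ℂ, τ x = ∑ ν : K →+* ℝ, ((ν x : ℝ) : ℂ) :=
    ((Equiv.ofBijective _ hj).sum_comp (fun τ : K →+* ℂ => τ x)).symm
  have : ((Algebra.trace ℚ K x : ℚ) : ℂ) = algebraMap ℚ ℂ (Algebra.trace ℚ K x) := by
    simp [algebraMap, Algebra.algebraMap]
  rw [Complex.ofReal_ratCast, this, h1, h2, h3]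
  push_cast
  rfl

lemma exists_residue (K : Type*) [Field K] [NumberField K] (m : ℕ) (hm : 1 ≤ m)
    (ω : Fin (finrank ℚ K) → 𝓞 K)
    (hωli : LinearIndependent ℤ ω)
    (hωspan : Submodule.span ℤ (Set.range ω) = ⊤) (x : 𝓞 K) :
    ∃ g : Fin (finrank ℚ K) → ℕ, (∀ k, 1 ≤ g k ∧ g k ≤ m) ∧
      (m : 𝓞 K) ∣ ((∑ k, (g k : 𝓞 K) * ω k) - x) := by
  set b : Basis (Fin (finrank ℚ K)) ℤ (𝓞 K) := Basis.mk hωli (le_of_eq hωspan.symm) with hb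
  have hbk : ∀ k, b k = ω k := fun k => by rw [hb]; exact Basis.mk_apply _ _ _
  set z : Fin (finrank ℚ K) → ℤ := fun k => b.repr x k with hz
  have hmZ : (0 : ℤ) < (m : ℤ) := by exact_mod_cast hm
  set g : Fin (finrank ℚ K) → ℕ :=
    fun k => if z k % (m : ℤ) = 0 then m else (z k % (m : ℤ)).toNat with hg
  have hgz : ∀ k, ((m : ℤ)) ∣ ((g k : ℤ) - z k) := by
    intro k
    by_cases h : z k % (m : ℤ) = 0
    · simp only [hg, if_pos h]
      exact dvd_sub (dvd_refl _) (Int.dvd_of_emod_eq_zero h)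
    · simp only [hg, if_neg h]
      have h0 : 0 ≤ z k % (m : ℤ) := Int.emod_nonneg _ (ne_of_gt hmZ)
      rw [Int.toNat_of_nonneg h0]
      have : z k % (m : ℤ) - z k = -((m : ℤ) * (z k / (m : ℤ))) := by
        have := Int.mul_ediv_add_emod (z k) (m : ℤ)
        linarith
      rw [this]
      exact dvd_neg.mpr (Dvd.intro _ rfl)
  refine ⟨g, fun k => ?_, ?_⟩
  · have h0 : 0 ≤ z k % (m : ℤ) := Int.emod_nonneg _ (ne_of_gt hmZ)
    have h1 : z k % (m : ℤ) < (m : ℤ) := Int.emod_lt_of_pos _ hmZ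
    constructor
    · by_cases h : z k % (m : ℤ) = 0
      · simp only [hg]; rw [if_pos h]; exact hm
      · simp only [hg]; rw [if_neg h]
        have : 0 < z k % (m : ℤ) := lt_of_le_of_ne h0 (Ne.symm h)
        omega
    · by_cases h : z k % (m : ℤ) = 0
      · simp only [hg]; rw [if_pos h]
      · simp only [hg]; rw [if_neg h]; omega
  · have hx : x = ∑ k, z k • ω k := by
      conv_lhs => rw [← b.sum_repr x]
      exact Finset.sum_congr rfl fun k _ => by rw [hbk]
    have key : (∑ k, (g k : 𝓞 K) * ω k) - x
        = ∑ k, (((g k : ℤ) - z k : ℤ) : 𝓞 K) * ω k := by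
      rw [hx, ← Finset.sum_sub_distrib]
      refine Finset.sum_congr rfl fun k _ => ?_
      rw [zsmul_eq_mul]
      push_cast
      ring
    rw [key]
    refine Finset.dvd_sum fun k _ => dvd_mul_of_dvd_left ?_ _
    have := map_dvd (Int.castRingHom (𝓞 K)) (hgz k)
    simpa using this

set_option maxHeartbeats 2000000 in
theorem diag_add_symm_represented_by_sum_of_squares
    (K : Type*) [Field K] [NumberField K]
    (htr : Fintype.card (K →+* ℝ) = finrank ℚ K)
    (p ℓ r γ : ℕ) (hp : p.Prime)
    (hrep2 : ∀ T : Matrix (Fin 2) (Fin 2) (𝓞 K), T.IsSymm →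
      (∀ ν : K →+* ℝ, (T.map fun a => ν (a : K)).PosSemidef) →
      (∀ i j, (p : 𝓞 K) ^ ℓ ∣ T i j) →
      ∃ U : Matrix (Fin 5) (Fin 2) (𝓞 K), T = Uᵀ * U)
    (hrep1 : ∀ a : 𝓞 K, (∀ ν : K →+* ℝ, 0 < ν (a : K)) →
      (r : ℚ) ≤ Algebra.trace ℚ K (a : K) → ∃ y : Fin 5 → 𝓞 K, a = ∑ i, y i ^ 2)
    (ω : Fin (finrank ℚ K) → 𝓞 K)
    (hωpos : ∀ k, ∀ ν : K →+* ℝ, 0 < ν ((ω k : K)))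
    (hωli : LinearIndependent ℤ ω)
    (hωspan : Submodule.span ℤ (Set.range ω) = ⊤)
    (hγ : ∀ f : Fin (finrank ℚ K) → ℕ, (∀ k, 1 ≤ f k ∧ f k ≤ p ^ ℓ) →
      ((∑ k, (f k) ^ 2 : ℕ) ≤ γ ∧
        ∀ ν : K →+* ℝ,
          ν (((∑ k, ω k ^ 2 : 𝓞 K) : K)) ≤ γ ∧
          ν (((∑ k, (f k : 𝓞 K) * ω k : 𝓞 K) : K)) ≤ γ))
    (n : ℕ) (hn : 2 ≤ n)
    (a : Fin n → 𝓞 K) (S : Matrix (Fin n) (Fin n) (𝓞 K)) (hS : S.IsSymm)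
    (f : Fin n → Fin n → Fin (finrank ℚ K) → ℕ)
    (hf : ∀ i j k, 1 ≤ f i j k ∧ f i j k ≤ p ^ ℓ)
    (PP : Fin n → Fin n → 𝓞 K)
    (hPP : ∀ i j, PP i j = ∑ k, (f i j k : 𝓞 K) * ω k)
    (hPPS : ∀ i j, (p : 𝓞 K) ^ ℓ ∣ (S i j - PP i j))
    (t : Fin n → Fin n → 𝓞 K)
    (hat : ∀ i, a i = ∑ j, t i j)
    (htpos : ∀ i j, ∀ ν : K →+* ℝ, 0 < ν ((t i j : K)))
    (htt : ∀ i j, ∀ ν : K →+* ℝ,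
      ν ((((S i j - PP i j) ^ 2 : 𝓞 K) : K)) < ν (((t i j * t j i : 𝓞 K) : K)))
    (hdiag : ∀ i, ∀ ν : K →+* ℝ,
      (2 * ((n : ℝ) - 1) * γ + (r : ℝ) / (finrank ℚ K : ℝ)) <
        ν (((t i i + S i i : 𝓞 K) : K))) :
    ∃ U : Matrix (Fin (5 * n + n * (n - 1) / 2 * (finrank ℚ K + 5))) (Fin n) (𝓞 K),
      Matrix.diagonal a + S = Uᵀ * U := by
  classical
  have hd : 0 < finrank ℚ K := finrank_pos
  have hm1 : 1 ≤ p ^ ℓ := Nat.one_le_pow _ _ hp.pos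
  -- choose the correction terms σ i j ≡ -t i j mod p^ℓ with small totally positive value
  have hres := fun (i j : Fin n) =>
    exists_residue K (p ^ ℓ) hm1 ω hωli hωspan (-(t i j))
  choose g hgbd hgdvd using hres
  set σ : Fin n → Fin n → 𝓞 K := fun i j => ∑ k, (g i j k : 𝓞 K) * ω k with hσdef
  have hσdvd : ∀ i j, (p : 𝓞 K) ^ ℓ ∣ (σ i j + t i j) := by
    intro i j
    have h := hgdvd i j
    have hcast : ((p ^ ℓ : ℕ) : 𝓞 K) = (p : 𝓞 K) ^ ℓ := by push_cast; ring
    rw [hcast, sub_neg_eq_add] at h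
    exact h
  have hσle : ∀ i j (ν : K →+* ℝ), ν (σ i j : K) ≤ γ :=
    fun i j ν => ((hγ (g i j) (hgbd i j)).2 ν).2
  have hσpos : ∀ i j (ν : K →+* ℝ), 0 < ν (σ i j : K) := by
    intro i j ν
    have hc : ((σ i j : 𝓞 K) : K) = ∑ k, ((g i j k : ℕ) : K) * (ω k : K) := by
      rw [hσdef]; push_cast; rfl
    rw [hc, map_sum]
    refine Finset.sum_pos (fun k _ => ?_) ⟨⟨0, hd⟩, Finset.mem_univ _⟩
    rw [_root_.map_mul, map_natCast]
    have h1 : (1 : ℝ) ≤ ((g i j k : ℕ) : ℝ) := by exact_mod_cast (hgbd i j k).1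
    exact mul_pos (lt_of_lt_of_le one_pos h1) (hωpos k ν)
  -- w and F
  set w : 𝓞 K := ∑ k, ω k ^ 2 with hwdef
  have hwle : ∀ ν : K →+* ℝ, ν (w : K) ≤ γ :=
    fun ν => ((hγ (fun _ => 1) (fun k => ⟨le_refl 1, hm1⟩)).2 ν).1
  set F : Fin n → Fin n → ℕ := fun i j => ∑ k, (f i j k) ^ 2 with hFdef
  have hFle : ∀ i j, F i j ≤ γ := fun i j => (hγ (f i j) (fun k => hf i j k)).1
  -- h1
  set h1 : Fin n → Fin n → 𝓞 K := fun i j => t i j + σ i j with hh1def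
  have hνh1 : ∀ i j (ν : K →+* ℝ), ν ((h1 i j : 𝓞 K) : K) = ν (t i j : K) + ν (σ i j : K) := by
    intro i j ν
    have : ((h1 i j : 𝓞 K) : K) = (t i j : K) + (σ i j : K) := by rw [hh1def]; push_cast; rfl
    rw [this, map_add]
  have hh1pos : ∀ i j (ν : K →+* ℝ), 0 < ν ((h1 i j : 𝓞 K) : K) := by
    intro i j ν
    rw [hνh1]
    exact add_pos (htpos i j ν) (hσpos i j ν)
  -- the 2×2 residual blocks
  set T2 : Fin n → Fin n → Matrix (Fin 2) (Fin 2) (𝓞 K) :=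
    fun i j => !![h1 i j, S i j - PP i j; S i j - PP i j, h1 j i] with hT2def
  have hTsymm : ∀ i j, (T2 i j).IsSymm := by
    intro i j
    rw [Matrix.IsSymm]
    ext u v
    fin_cases u <;> fin_cases v <;> simp [hT2def]
  have hTpsd : ∀ i j (ν : K →+* ℝ), ((T2 i j).map fun x => ν (x : K)).PosSemidef := by
    intro i j ν
    have e00 : ((T2 i j).map fun x => ν (x : K)) 0 0 = ν ((h1 i j : 𝓞 K) : K) := by
      simp [hT2def]
    have e01 : ((T2 i j).map fun x => ν (x : K)) 0 1 = ν ((S i j - PP i j : 𝓞 K) : K) := by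
      simp [hT2def]
    have e10 : ((T2 i j).map fun x => ν (x : K)) 1 0 = ν ((S i j - PP i j : 𝓞 K) : K) := by
      simp [hT2def]
    have e11 : ((T2 i j).map fun x => ν (x : K)) 1 1 = ν ((h1 j i : 𝓞 K) : K) := by
      simp [hT2def]
    refine psd2 _ ?_ ?_ ?_ ?_
    · rw [e10, e01]
    · rw [e00]; exact le_of_lt (hh1pos i j ν)
    · rw [e11]; exact le_of_lt (hh1pos j i ν)
    · -- determinant condition
      rw [e00, e01, e10, e11]
      have hsq : ν ((S i j - PP i j : 𝓞 K) : K) * ν ((S i j - PP i j : 𝓞 K) : K)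
          = ν ((((S i j - PP i j) ^ 2 : 𝓞 K) : K)) := by
        rw [show (((S i j - PP i j) ^ 2 : 𝓞 K) : K) = ((S i j - PP i j : 𝓞 K) : K) ^ 2 by
          push_cast; ring]
        rw [map_pow]; ring
      have hmul : ν (((t i j * t j i : 𝓞 K) : K)) = ν (t i j : K) * ν (t j i : K) := by
        rw [show ((t i j * t j i : 𝓞 K) : K) = (t i j : K) * (t j i : K) by push_cast; ring]
        rw [_root_.map_mul]
      have h := htt i j ν
      rw [← hsq, hmul] at h
      rw [hνh1 i j ν, hνh1 j i ν]
      nlinarith [htpos i j ν, htpos j i ν, hσpos i j ν, hσpos j i ν]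
  have hTdvd : ∀ i j, ∀ u v, (p : 𝓞 K) ^ ℓ ∣ T2 i j u v := by
    intro i j u v
    fin_cases u <;> fin_cases v <;> simp [hT2def, hh1def]
    · have := hσdvd i j; rwa [add_comm] at this
    · exact hPPS i j
    · exact hPPS i j
    · have := hσdvd j i; rwa [add_comm] at this
  choose U5 hU5 using fun i j => hrep2 (T2 i j) (hTsymm i j) (hTpsd i j) (hTdvd i j)
  -- the exact d-square blocks
  set VG : Fin n → Fin n → Matrix (Fin (finrank ℚ K)) (Fin 2) (𝓞 K) :=
    fun i j => Matrix.of fun k => ![(f i j k : 𝓞 K), ω k] with hVGdef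
  have hVGgram : ∀ i j, (VG i j)ᵀ * VG i j = !![(F i j : 𝓞 K), PP i j; PP i j, w] := by
    intro i j
    have hFc : ((F i j : ℕ) : 𝓞 K) = ∑ k, ((f i j k : 𝓞 K)) ^ 2 := by
      rw [hFdef]; push_cast; ring
    refine Matrix.ext fun u v => ?_
    fin_cases u <;> fin_cases v <;>
      simp only [Matrix.mul_apply, hVGdef, Matrix.transpose_apply, Matrix.of_apply,
        Fin.mk_zero, Fin.mk_one, Fin.isValue,
        Matrix.cons_val_zero, Matrix.cons_val_one, Matrix.head_cons]
    · rw [hFc]; exact Finset.sum_congr rfl fun k _ => (sq _).symm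
    · rw [hPP]
    · rw [hPP]; exact Finset.sum_congr rfl fun k _ => mul_comm _ _
    · rw [hwdef]; exact Finset.sum_congr rfl fun k _ => (sq _).symm
  -- the combined per-pair 2×2 matrix
  set Mf : Fin n → Fin n → Matrix (Fin 2) (Fin 2) (𝓞 K) :=
    fun i j => !![(F i j : 𝓞 K) + h1 i j, S i j; S i j, w + h1 j i] with hMfdef
  have hMfE : ∀ i j, (VG i j)ᵀ * VG i j + T2 i j = Mf i j := by
    intro i j
    rw [hVGgram]
    ext u v
    fin_cases u <;> fin_cases v <;> simp [hT2def, hMfdef] <;> ring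
  -- the diagonal residuals
  set cd : Fin n → Fin n → 𝓞 K := fun x j =>
    if x < j then (F x j : 𝓞 K) + h1 x j else if j < x then w + h1 x j else 0 with hcddef
  set dd : Fin n → 𝓞 K := fun i => a i + S i i - ∑ j, cd i j with hdddef
  have hddν : ∀ i (ν : K →+* ℝ), (r : ℝ) / (finrank ℚ K : ℝ) < ν ((dd i : 𝓞 K) : K) := by
    intro i ν
    set φ : 𝓞 K →+* ℝ := ν.comp (algebraMap (𝓞 K) K) with hφ
    have hφx : ∀ x : 𝓞 K, ν (x : K) = φ x := fun x => rfl
    have hcdii : cd i i = 0 := by rw [hcddef]; simp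
    have e1 : φ (dd i) = (φ (t i i) + φ (S i i)) +
        ∑ j ∈ Finset.univ.erase i, (φ (t i j) - φ (cd i j)) := by
      rw [hdddef]
      simp only [map_sub, map_add, map_sum]
      rw [hat i, map_sum]
      rw [← Finset.add_sum_erase _ (fun j => φ (t i j)) (Finset.mem_univ i),
        ← Finset.add_sum_erase _ (fun j => φ (cd i j)) (Finset.mem_univ i),
        hcdii, map_zero, Finset.sum_sub_distrib]
      ring
    have hbd : ∀ j ∈ Finset.univ.erase i, -(2 * (γ : ℝ)) ≤ φ (t i j) - φ (cd i j) := by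
      intro j hj
      have hji : j ≠ i := (Finset.mem_erase.mp hj).1
      rcases lt_trichotomy i j with hij | hij | hij
      · have : cd i j = (F i j : 𝓞 K) + (t i j + σ i j) := by
          rw [hcddef]; simp only [if_pos hij, hh1def]
        rw [this, map_add, map_add, map_natCast]
        have h1 : ((F i j : ℕ) : ℝ) ≤ γ := by exact_mod_cast hFle i j
        have h2 : φ (σ i j) ≤ γ := by rw [← hφx]; exact hσle i j ν
        linarith
      · exact absurd hij.symm hji
      · have : cd i j = w + (t i j + σ i j) := by
          rw [hcddef]; simp only [if_neg (not_lt_of_gt hij), if_pos hij, hh1def]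
        rw [this, map_add, map_add]
        have h1 : φ w ≤ γ := by rw [← hφx]; exact hwle ν
        have h2 : φ (σ i j) ≤ γ := by rw [← hφx]; exact hσle i j ν
        linarith
    have hsum : ∑ j ∈ Finset.univ.erase i, (-(2 * (γ : ℝ)))
        ≤ ∑ j ∈ Finset.univ.erase i, (φ (t i j) - φ (cd i j)) :=
      Finset.sum_le_sum hbd
    rw [Finset.sum_const, Finset.card_erase_of_mem (Finset.mem_univ i),
      Finset.card_univ, Fintype.card_fin, nsmul_eq_mul] at hsum
    have hts : φ (t i i) + φ (S i i) = ν ((t i i + S i i : 𝓞 K) : K) := by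
      rw [hφx, map_add]
    have hdg := hdiag i ν
    have hn1 : ((n - 1 : ℕ) : ℝ) = (n : ℝ) - 1 := by
      have : 1 ≤ n := le_trans one_le_two hn
      push_cast [this]
      ring
    rw [hφx]
    rw [e1]
    rw [hn1] at hsum
    nlinarith [hsum, hdg, hts]
  have hddpos : ∀ i (ν : K →+* ℝ), 0 < ν ((dd i : 𝓞 K) : K) := by
    intro i ν
    refine lt_of_le_of_lt ?_ (hddν i ν)
    positivity
  have hddtr : ∀ i, (r : ℚ) ≤ Algebra.trace ℚ K ((dd i : 𝓞 K) : K) := by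
    intro i
    have h1 : ((r : ℚ) : ℝ) ≤ ((Algebra.trace ℚ K ((dd i : 𝓞 K) : K) : ℚ) : ℝ) := by
      rw [trace_eq_sum_real K htr]
      have hle : ∀ ν : K →+* ℝ, (r : ℝ) / (finrank ℚ K : ℝ) ≤ ν ((dd i : 𝓞 K) : K) :=
        fun ν => le_of_lt (hddν i ν)
      calc ((r : ℚ) : ℝ) = (Fintype.card (K →+* ℝ)) * ((r : ℝ) / (finrank ℚ K : ℝ)) := by
            rw [htr]
            field_simp
            norm_cast
          _ ≤ ∑ ν : K →+* ℝ, ν ((dd i : 𝓞 K) : K) := by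
            have h2 := Finset.card_nsmul_le_sum Finset.univ
              (fun ν : K →+* ℝ => ν ((dd i : 𝓞 K) : K))
              ((r : ℝ) / (finrank ℚ K : ℝ)) (fun ν _ => hle ν)
            rw [Finset.card_univ, nsmul_eq_mul] at h2
            exact h2
    exact_mod_cast h1
  choose y hy using fun i => hrep1 (dd i) (hddpos i) (hddtr i)
  -- assembly
  set ι : Type := Fin n ⊕ {q : Fin n × Fin n // q.1 < q.2} with hι
  set sz : ι → ℕ := fun c =>
    Sum.elim (fun _ : Fin n => 5)
      (fun _ : {q : Fin n × Fin n // q.1 < q.2} => finrank ℚ K + 5) c with hsz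
  set W : ∀ c : ι, Matrix (Fin (sz c)) (Fin n) (𝓞 K) := fun c =>
    Sum.rec (motive := fun c => Matrix (Fin (sz c)) (Fin n) (𝓞 K))
      (fun i => embD i (y i))
      (fun q => (Matrix.fromRows (emb q.1.1 q.1.2 (VG q.1.1 q.1.2))
        (emb q.1.1 q.1.2 (U5 q.1.1 q.1.2))).submatrix finSumFinEquiv.symm id) c with hW
  have hcard : Fintype.card ((c : ι) × Fin (sz c))
      = 5 * n + n * (n - 1) / 2 * (finrank ℚ K + 5) := by
    rw [Fintype.card_sigma]
    rw [Fintype.sum_sum_type]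
    simp only [hsz, Sum.elim_inl, Sum.elim_inr, Fintype.card_fin]
    rw [Finset.sum_const, Finset.sum_const, Finset.card_univ, Finset.card_univ,
      Fintype.card_fin, card_pairs]
    ring
  obtain ⟨U, hU⟩ := gram_assemble (fun c : ι => Fin (sz c)) W hcard
  refine ⟨U, ?_⟩
  rw [← hU]
  -- the per-block gram matrices
  have hWinl : ∀ i : Fin n, (W (Sum.inl i))ᵀ * W (Sum.inl i)
      = Matrix.of fun x y => if x = i ∧ y = i then dd i else 0 := by
    intro i
    have hWl : W (Sum.inl i) = embD i (y i) := rfl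
    rw [hWl]
    show (embD i (y i))ᵀ * embD i (y i) = _
    rw [embD_gram]
    ext x y
    simp only [Matrix.of_apply]
    split_ifs
    · exact congrArg _ (hy i).symm
    · rfl
  have hWinr : ∀ q : {q : Fin n × Fin n // q.1 < q.2}, (W (Sum.inr q))ᵀ * W (Sum.inr q)
      = plc q.1.1 q.1.2 (Mf q.1.1 q.1.2) := by
    intro q
    have hWr : W (Sum.inr q) = (Matrix.fromRows (emb q.1.1 q.1.2 (VG q.1.1 q.1.2))
        (emb q.1.1 q.1.2 (U5 q.1.1 q.1.2))).submatrix finSumFinEquiv.symm id := rfl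
    rw [hWr]
    show ((Matrix.fromRows (emb q.1.1 q.1.2 (VG q.1.1 q.1.2))
        (emb q.1.1 q.1.2 (U5 q.1.1 q.1.2))).submatrix finSumFinEquiv.symm id)ᵀ *
        (Matrix.fromRows (emb q.1.1 q.1.2 (VG q.1.1 q.1.2))
        (emb q.1.1 q.1.2 (U5 q.1.1 q.1.2))).submatrix finSumFinEquiv.symm id = _
    rw [gram_reindex finSumFinEquiv.symm _, Matrix.transpose_fromRows,
      Matrix.fromCols_mul_fromRows (emb q.1.1 q.1.2 (VG q.1.1 q.1.2))ᵀ
        (emb q.1.1 q.1.2 (U5 q.1.1 q.1.2))ᵀ (emb q.1.1 q.1.2 (VG q.1.1 q.1.2))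
        (emb q.1.1 q.1.2 (U5 q.1.1 q.1.2))]
    rw [emb_gram _ _ (ne_of_lt q.2), emb_gram _ _ (ne_of_lt q.2), ← plc_add, ← hU5, hMfE]
  rw [Fintype.sum_sum_type]
  rw [Finset.sum_congr rfl (fun i _ => hWinl i), Finset.sum_congr rfl (fun q _ => hWinr q)]
  -- final entrywise verification
  have hMf00 : ∀ i j, Mf i j 0 0 = (F i j : 𝓞 K) + h1 i j := fun i j => by simp [hMfdef]
  have hMf01 : ∀ i j, Mf i j 0 1 = S i j := fun i j => by simp [hMfdef]
  have hMf10 : ∀ i j, Mf i j 1 0 = S i j := fun i j => by simp [hMfdef]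
  have hMf11 : ∀ i j, Mf i j 1 1 = w + h1 j i := fun i j => by simp [hMfdef]
  refine Matrix.ext fun x z => ?_
  rw [Matrix.add_apply, Matrix.add_apply, Matrix.sum_apply, Matrix.sum_apply]
  have hsub : (∑ q : {q : Fin n × Fin n // q.1 < q.2},
        plc q.1.1 q.1.2 (Mf q.1.1 q.1.2) x z)
      = ∑ i : Fin n, ∑ j : Fin n, (if i < j then plc i j (Mf i j) x z else 0) := by
    have h1 : (∑ q : {q : Fin n × Fin n // q.1 < q.2},
          plc q.1.1 q.1.2 (Mf q.1.1 q.1.2) x z)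
        = ∑ qq ∈ Finset.univ.filter (fun qq : Fin n × Fin n => qq.1 < qq.2),
            plc qq.1 qq.2 (Mf qq.1 qq.2) x z :=
      (Finset.sum_subtype
        (Finset.univ.filter (fun qq : Fin n × Fin n => qq.1 < qq.2))
        (fun q => by simp)
        (fun qq : Fin n × Fin n => plc qq.1 qq.2 (Mf qq.1 qq.2) x z)).symm
    rw [h1, Finset.sum_filter, Fintype.sum_prod_type]
  rw [hsub]
  simp only [Matrix.of_apply]
  by_cases hxz : x = z
  · -- diagonal case
    subst hxz
    have hsum1 : (∑ i : Fin n, if x = i ∧ x = i then dd i else 0) = dd x := by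
      simp only [and_self]
      rw [Finset.sum_ite_eq]
      simp
    have hterm : ∀ i j : Fin n, (if i < j then plc i j (Mf i j) x x else 0)
        = (if x = i then (if i < j then Mf i j 0 0 else 0) else 0)
          + (if x = j then (if i < j then Mf i j 1 1 else 0) else 0) :=
      fun i j => plc_diag_term x i j (Mf i j)
    rw [Finset.sum_congr rfl fun i _ => Finset.sum_congr rfl fun j _ => hterm i j]
    simp only [Finset.sum_add_distrib]
    have hA : (∑ i : Fin n, ∑ j : Fin n,
          (if x = i then (if i < j then Mf i j 0 0 else 0) else 0))
        = ∑ j : Fin n, (if x < j then Mf x j 0 0 else 0) := by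
      have : ∀ i : Fin n, (∑ j : Fin n, (if x = i then (if i < j then Mf i j 0 0 else 0) else 0))
          = if x = i then (∑ j : Fin n, (if i < j then Mf i j 0 0 else 0)) else 0 := by
        intro i
        by_cases hxi : x = i <;> simp [hxi]
      rw [Finset.sum_congr rfl fun i _ => this i, Finset.sum_ite_eq]
      simp
    have hB : (∑ i : Fin n, ∑ j : Fin n,
          (if x = j then (if i < j then Mf i j 1 1 else 0) else 0))
        = ∑ i : Fin n, (if i < x then Mf i x 1 1 else 0) := by
      refine Finset.sum_congr rfl fun i _ => ?_
      rw [Finset.sum_ite_eq]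
      simp
    rw [hA, hB, hsum1]
    have hcdsplit : ∀ j : Fin n, cd x j
        = (if x < j then Mf x j 0 0 else 0) + (if j < x then Mf j x 1 1 else 0) := by
      intro j
      rcases lt_trichotomy x j with h | h | h
      · rw [hcddef]
        simp only [if_pos h, if_neg (asymm h)]
        rw [hMf00]
        simp [asymm h]
      · rw [hcddef]
        simp [h, lt_irrefl]
      · rw [hcddef]
        simp only [if_neg (asymm h), if_pos h]
        rw [hMf11]
        simp [asymm h, h]
    have hcdsum : (∑ j : Fin n, cd x j)
        = (∑ j : Fin n, (if x < j then Mf x j 0 0 else 0))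
          + (∑ j : Fin n, (if j < x then Mf j x 1 1 else 0)) := by
      rw [← Finset.sum_add_distrib]
      exact Finset.sum_congr rfl fun j _ => hcdsplit j
    have hddx : dd x = a x + S x x - ∑ j, cd x j := by rw [hdddef]
    rw [Matrix.diagonal_apply_eq]
    rw [hddx, hcdsum]
    ring
  · -- off-diagonal case
    have hsum1 : (∑ i : Fin n, if x = i ∧ z = i then dd i else 0) = 0 := by
      refine Finset.sum_eq_zero fun i _ => ?_
      rw [if_neg]
      rintro ⟨h1, h2⟩
      exact hxz (h1.trans h2.symm)
    have hterm : ∀ i j : Fin n, (if i < j then plc i j (Mf i j) x z else 0)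
        = (if x = i then (if z = j then (if i < j then Mf i j 0 1 else 0) else 0) else 0)
          + (if z = i then (if x = j then (if i < j then Mf i j 1 0 else 0) else 0) else 0) :=
      fun i j => plc_offdiag_term x z i j hxz (Mf i j)
    rw [Finset.sum_congr rfl fun i _ => Finset.sum_congr rfl fun j _ => hterm i j]
    simp only [Finset.sum_add_distrib]
    have hA : (∑ i : Fin n, ∑ j : Fin n,
          (if x = i then (if z = j then (if i < j then Mf i j 0 1 else 0) else 0) else 0))
        = if x < z then Mf x z 0 1 else 0 := by
      have : ∀ i : Fin n, (∑ j : Fin n,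
            (if x = i then (if z = j then (if i < j then Mf i j 0 1 else 0) else 0) else 0))
          = if x = i then (if i < z then Mf i z 0 1 else 0) else 0 := by
        intro i
        by_cases hxi : x = i
        · simp only [if_pos hxi]
          rw [Finset.sum_ite_eq]
          simp
        · simp [hxi]
      rw [Finset.sum_congr rfl fun i _ => this i, Finset.sum_ite_eq]
      simp
    have hB : (∑ i : Fin n, ∑ j : Fin n,
          (if z = i then (if x = j then (if i < j then Mf i j 1 0 else 0) else 0) else 0))
        = if z < x then Mf z x 1 0 else 0 := by
      have : ∀ i : Fin n, (∑ j : Fin n,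
            (if z = i then (if x = j then (if i < j then Mf i j 1 0 else 0) else 0) else 0))
          = if z = i then (if i < x then Mf i x 1 0 else 0) else 0 := by
        intro i
        by_cases hzi : z = i
        · simp only [if_pos hzi]
          rw [Finset.sum_ite_eq]
          simp
        · simp [hzi]
      rw [Finset.sum_congr rfl fun i _ => this i, Finset.sum_ite_eq]
      simp
    rw [hA, hB, hsum1, Matrix.diagonal_apply_ne _ hxz]
    rcases lt_trichotomy x z with h | h | h
    · rw [if_pos h, if_neg (asymm h), hMf01]
      ring
    · exact absurd h hxz
    · rw [if_neg (asymm h), if_pos h, hMf10, hS.apply]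
      ring
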